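/- Let n ≥ 2, let q = (Q_1,…,Q_n,Q_n,…,Q_1) be a symmetric potential on the path P_{2n}, and let H be the corresponding Hamiltonian. Suppose perfect state transfer occurs between the endpoints 1 and 2n at some time T ∈ ℝ, and suppose in addition that every eigenvalue of H is rational. Then every potential value Q_1,…,Q_n is rational. -/

import Mathlib

open Matrix

/-- Adjacency matrix of the path on `n` vertices. -/
def pathAdj (n : ℕ) : Matrix (Fin n) (Fin n) ℝ :=
  Matrix.of fun j k => if (j : ℕ) + 1 = (k : ℕ) ∨ (k : ℕ) + 1 = (j : ℕ) then 1 else 0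

/-- Hamiltonian of the path on `n` vertices with potential `q`. -/
def pathHam (n : ℕ) (q : Fin n → ℝ) : Matrix (Fin n) (Fin n) ℝ :=
  pathAdj n + Matrix.diagonal q

/-- Perfect state transfer from `u` to `v` at time `T` for real Hamiltonian `H`. -/
noncomputable def pst {ι : Type*} [Fintype ι] [DecidableEq ι]
    (H : Matrix ι ι ℝ) (u v : ι) (T : ℝ) : Prop :=
  ‖NormedSpace.exp ((Complex.I * (T : ℂ)) • H.map (Complex.ofReal)) u v‖ = 1

open Polynomial

lemma charpoly_conj {m : ℕ} (U D : Matrix (Fin m) (Fin m) ℝ) (hU : U * star U = 1)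
    (hU' : star U * U = 1) :
    (U * D * star U).charpoly = D.charpoly := by
  unfold Matrix.charpoly
  have key : charmatrix (U * D * star U) =
      (U.map C) * charmatrix D * ((star U).map C) := by
    unfold charmatrix
    rw [Matrix.mul_sub, Matrix.sub_mul]
    congr 1
    · have h1 : (U.map C) * (Matrix.scalar (Fin m)) (X : ℝ[X]) = (Matrix.scalar (Fin m)) (X : ℝ[X]) * (U.map C) := by
        ext i j
        rw [Matrix.scalar_apply, Matrix.mul_diagonal, Matrix.diagonal_mul, mul_comm]
      rw [h1, Matrix.mul_assoc, ← Matrix.map_mul, hU]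
      simp
    · simp [RingHom.mapMatrix_apply, ← Matrix.map_mul]
  rw [key, Matrix.det_mul, Matrix.det_mul, mul_comm, ← mul_assoc, ← Matrix.det_mul,
    ← Matrix.map_mul, hU']
  simp

lemma charpoly_diag {m : ℕ} (d : Fin m → ℝ) :
    (Matrix.diagonal d).charpoly = ∏ i, (X - C (d i)) := by
  unfold Matrix.charpoly
  have : charmatrix (Matrix.diagonal d) = Matrix.diagonal (fun i => X - C (d i)) := by
    ext i j
    by_cases h : i = j
    · subst h; simp [charmatrix_apply_eq]
    · simp [charmatrix_apply_ne _ _ _ h, Matrix.diagonal_apply_ne _ h]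
  rw [this, Matrix.det_diagonal]

lemma charpoly_herm {m : ℕ} (A : Matrix (Fin m) (Fin m) ℝ) (hA : A.IsHermitian) :
    A.charpoly = ∏ i, (X - C (hA.eigenvalues i)) := by
  have hs := hA.spectral_theorem
  have h1 : ((hA.eigenvectorUnitary : Matrix (Fin m) (Fin m) ℝ)) * star (hA.eigenvectorUnitary : Matrix (Fin m) (Fin m) ℝ) = 1 := by
    exact (Matrix.mem_unitaryGroup_iff').mp (hA.eigenvectorUnitary).2 |>.symm ▸ (by
      simpa using (unitary.mul_star_self_of_mem (hA.eigenvectorUnitary).2))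
  have h2 : star ((hA.eigenvectorUnitary : Matrix (Fin m) (Fin m) ℝ)) * (hA.eigenvectorUnitary : Matrix (Fin m) (Fin m) ℝ) = 1 := by
    simpa using (unitary.star_mul_self_of_mem (hA.eigenvectorUnitary).2)
  calc A.charpoly = ((hA.eigenvectorUnitary : Matrix (Fin m) (Fin m) ℝ) * Matrix.diagonal (RCLike.ofReal ∘ hA.eigenvalues) * star (hA.eigenvectorUnitary : Matrix (Fin m) (Fin m) ℝ)).charpoly := by rw [← Unitary.conjStarAlgAut_apply (S := ℝ), ← hs]
    _ = (Matrix.diagonal (RCLike.ofReal ∘ hA.eigenvalues)).charpoly := charpoly_conj _ _ h1 h2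
    _ = ∏ i, (X - C (hA.eigenvalues i)) := by
        rw [charpoly_diag]; rfl


lemma pathHam_apply (m : ℕ) (q : Fin m → ℝ) (i j : Fin m) :
    pathHam m q i j = (if (i:ℕ)+1=(j:ℕ) ∨ (j:ℕ)+1=(i:ℕ) then 1 else 0)
      + (if i = j then q i else 0) := by
  simp [pathHam, pathAdj, Matrix.diagonal]

lemma charm_sub (m : ℕ) (q : Fin m → ℝ) (l : ℕ) (f g : Fin l → Fin m)
    (hf : ∀ i, ((f i : ℕ)) = (i : ℕ)) (hg : ∀ i, ((g i : ℕ)) = (i : ℕ)) :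
    (charmatrix (pathHam m q)).submatrix f g = charmatrix (pathHam l (fun i => q (f i))) := by
  ext i j
  by_cases h : i = j
  · subst h
    have hfg : f i = g i := Fin.ext (by rw [hf, hg])
    rw [Matrix.submatrix_apply, ← hfg, charmatrix_apply_eq, charmatrix_apply_eq,
      pathHam_apply, pathHam_apply]
    simp
  · have hfne : f i ≠ g j := fun hc => h (Fin.ext (by rw [← hf i, ← hg j, hc]))
    rw [Matrix.submatrix_apply, charmatrix_apply_ne _ _ _ hfne, charmatrix_apply_ne _ _ _ h]
    rw [pathHam_apply, pathHam_apply, if_neg hfne, if_neg h, hf, hg]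

lemma pathHam_charpoly_rec (k : ℕ) (q : Fin (k+2) → ℝ) :
    (pathHam (k+2) q).charpoly =
      (X - C (q (Fin.last (k+1)))) * (pathHam (k+1) (fun i => q i.castSucc)).charpoly
        - (pathHam k (fun i => q ⟨i, by omega⟩)).charpoly := by
  set M := pathHam (k+2) q with hM
  set p : Fin (k+2) := ⟨k, by omega⟩ with hp
  rw [Matrix.charpoly, Matrix.det_succ_row (charmatrix M) (Fin.last (k+1))]
  have key : ∀ j : Fin (k+2),
      (-1 : ℝ[X]) ^ ((Fin.last (k+1) : ℕ) + (j : ℕ)) * charmatrix M (Fin.last (k+1)) j *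
        ((charmatrix M).submatrix (Fin.last (k+1)).succAbove j.succAbove).det
      = (if j = Fin.last (k+1) then
          (X - C (q (Fin.last (k+1)))) *
            ((charmatrix M).submatrix (Fin.last (k+1)).succAbove
              (Fin.last (k+1)).succAbove).det else 0)
        + (if j = p then
            ((charmatrix M).submatrix (Fin.last (k+1)).succAbove p.succAbove).det else 0) := by
    intro j
    by_cases h1 : j = Fin.last (k+1)
    · subst h1
      rw [if_pos rfl, if_neg (by simp [hp, Fin.ext_iff]), add_zero, charmatrix_apply_eq]
      have hsgn : (-1 : ℝ[X]) ^ ((Fin.last (k+1) : ℕ) + ((Fin.last (k+1) : Fin (k+2)) : ℕ))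
          = 1 := Even.neg_one_pow ⟨k+1, by simp [Fin.val_last]⟩
      rw [hsgn, one_mul]
      have hdm : M (Fin.last (k+1)) (Fin.last (k+1)) = q (Fin.last (k+1)) := by
        rw [hM, pathHam_apply]; simp
      rw [hdm]
    · by_cases h2 : j = p
      · subst h2
        rw [if_neg h1, if_pos rfl, zero_add]
        have hne : Fin.last (k+1) ≠ p := by simp [hp, Fin.ext_iff]
        rw [charmatrix_apply_ne _ _ _ hne]
        have hentry : M (Fin.last (k+1)) p = 1 := by
          rw [hM, pathHam_apply, if_pos (Or.inr (by simp [hp, Fin.val_last])),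
            if_neg hne, add_zero]
        rw [hentry]
        have hsgn : (-1 : ℝ[X]) ^ ((Fin.last (k+1) : ℕ) + ((p : Fin (k+2)) : ℕ))
            = -1 := Odd.neg_one_pow ⟨k, by simp [hp, Fin.val_last]; omega⟩
        rw [hsgn]
        simp
      · rw [if_neg h1, if_neg h2, add_zero]
        have hne : Fin.last (k+1) ≠ j := fun hc => h1 hc.symm
        rw [charmatrix_apply_ne _ _ _ hne]
        have hentry : M (Fin.last (k+1)) j = 0 := by
          rw [hM, pathHam_apply, if_neg, if_neg hne]
          · ring
          · rintro (hc | hc)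
            · have := j.is_lt; simp [Fin.val_last] at hc; omega
            · exact h2 (Fin.ext (by simp [hp, Fin.val_last] at hc ⊢; omega))
        rw [hentry]
        simp
  rw [Finset.sum_congr rfl (fun j _ => key j), Finset.sum_add_distrib,
    Finset.sum_ite_eq' Finset.univ, Finset.sum_ite_eq' Finset.univ,
    if_pos (Finset.mem_univ _), if_pos (Finset.mem_univ _)]
  have d1 : ((charmatrix M).submatrix (Fin.last (k+1)).succAbove
      (Fin.last (k+1)).succAbove).det = (pathHam (k+1) (fun i => q i.castSucc)).charpoly := by
    rw [Fin.succAbove_last,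
      charm_sub (k+2) q (k+1) Fin.castSucc Fin.castSucc (fun i => rfl) (fun i => rfl)]
    rfl
  have d2 : ((charmatrix M).submatrix (Fin.last (k+1)).succAbove p.succAbove).det
      = -(pathHam k (fun i => q ⟨i, by omega⟩)).charpoly := by
    rw [Fin.succAbove_last]
    set B := (charmatrix M).submatrix Fin.castSucc p.succAbove with hB
    rw [Matrix.det_succ_column B (Fin.last k)]
    have hcol : p.succAbove (Fin.last k) = Fin.last (k+1) := by
      rw [Fin.succAbove_of_le_castSucc _ _ (by rw [Fin.le_def]; simp [hp, Fin.val_last])]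
      rfl
    have key2 : ∀ i : Fin (k+1),
        (-1:ℝ[X])^((i:ℕ) + ((Fin.last k : Fin (k+1)):ℕ)) * B i (Fin.last k) *
          (B.submatrix i.succAbove (Fin.last k).succAbove).det
        = if i = Fin.last k then
            -(B.submatrix (Fin.last k).succAbove (Fin.last k).succAbove).det else 0 := by
      intro i
      have hrowne : ∀ i : Fin (k+1), Fin.castSucc i ≠ Fin.last (k+1) := by
        intro i hc
        have := i.is_lt
        rw [Fin.ext_iff] at hc
        simp [Fin.val_last] at hc
        omega
      by_cases h : i = Fin.last k
      · subst h
        rw [if_pos rfl]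
        have hBil : B (Fin.last k) (Fin.last k) = -1 := by
          rw [hB, Matrix.submatrix_apply, hcol, charmatrix_apply_ne _ _ _ (hrowne _),
            hM, pathHam_apply, if_pos (Or.inl (by simp [Fin.val_last])),
            if_neg (hrowne _), add_zero]
          simp
        rw [hBil]
        have hsgn : (-1:ℝ[X])^(((Fin.last k : Fin (k+1)):ℕ) + ((Fin.last k : Fin (k+1)):ℕ))
            = 1 := Even.neg_one_pow ⟨k, by simp [Fin.val_last]⟩
        rw [hsgn]
        ring
      · rw [if_neg h]
        have hBil : B i (Fin.last k) = 0 := by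
          rw [hB, Matrix.submatrix_apply, hcol, charmatrix_apply_ne _ _ _ (hrowne _),
            hM, pathHam_apply, if_neg, if_neg (hrowne _)]
          · simp
          · rintro (hc | hc)
            · exact h (Fin.ext (by simp [Fin.val_last] at hc ⊢; omega))
            · have := i.is_lt; simp [Fin.val_last] at hc; omega
        rw [hBil]
        ring
    rw [Finset.sum_congr rfl (fun i _ => key2 i), Finset.sum_ite_eq' Finset.univ,
      if_pos (Finset.mem_univ _)]
    congr 1
    rw [Fin.succAbove_last, hB, Matrix.submatrix_submatrix]
    have hg : ∀ j : Fin k, ((p.succAbove (Fin.castSucc j) : Fin (k+2)) : ℕ) = (j : ℕ) := by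
      intro j
      rw [Fin.succAbove_of_castSucc_lt _ _ (by rw [Fin.lt_def]; simp [hp])]
      rfl
    rw [charm_sub (k+2) q k (Fin.castSucc ∘ Fin.castSucc) (p.succAbove ∘ Fin.castSucc)
      (fun i => rfl) hg]
    rfl
  rw [d1, d2]
  ring


lemma sum_ite_val (m : ℕ) (c : ℕ) (x : Fin m → ℝ) :
    (∑ j : Fin m, if c = (j:ℕ) then x j else 0) = if h : c < m then x ⟨c, h⟩ else 0 := by
  by_cases h : c < m
  · rw [dif_pos h, Finset.sum_eq_single (⟨c, h⟩ : Fin m)]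
    · simp
    · intro b _ hb
      exact if_neg (fun hc => hb (Fin.ext hc.symm))
    · intro hc; exact absurd (Finset.mem_univ _) hc
  · rw [dif_neg h]
    apply Finset.sum_eq_zero
    intro j _
    exact if_neg (fun hc => h (by rw [hc]; exact j.is_lt))

lemma pathHam_mulVec (m : ℕ) (q : Fin m → ℝ) (x : Fin m → ℝ) (i : Fin m) :
    (pathHam m q).mulVec x i =
      (if h : (i:ℕ)+1 < m then x ⟨(i:ℕ)+1, h⟩ else 0) + q i * x i
      + (if h : 0 < (i:ℕ) then x ⟨(i:ℕ)-1, by omega⟩ else 0) := by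
  have hsummand : ∀ j : Fin m, pathHam m q i j * x j =
      (if (i:ℕ)+1 = (j:ℕ) then x j else 0) + (if i = j then q i * x j else 0)
      + (if (i:ℕ)-1 = (j:ℕ) ∧ 0 < (i:ℕ) then x j else 0) := by
    intro j
    rw [pathHam_apply]
    by_cases hd : i = j
    · subst hd
      rw [if_pos rfl, if_pos rfl, if_neg (by omega), if_neg (by omega),
        if_neg (by omega)]
      ring
    · rw [if_neg hd, if_neg hd]
      have hne : (i:ℕ) ≠ (j:ℕ) := fun hc => hd (Fin.ext hc)
      by_cases h1 : (i:ℕ)+1 = (j:ℕ)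
      · rw [if_pos (Or.inl h1), if_pos h1, if_neg (by omega)]
        ring
      · by_cases h2 : (j:ℕ)+1 = (i:ℕ)
        · rw [if_pos (Or.inr h2), if_neg h1, if_pos (by omega)]
          ring
        · rw [if_neg (by tauto), if_neg h1, if_neg (by omega)]
          ring
  rw [Matrix.mulVec, dotProduct]
  rw [Finset.sum_congr rfl (fun j _ => hsummand j), Finset.sum_add_distrib,
    Finset.sum_add_distrib, sum_ite_val]
  congr 1
  · congr 1
    rw [Finset.sum_ite_eq Finset.univ i (fun j => q i * x j), if_pos (Finset.mem_univ _)]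
  · by_cases h : 0 < (i:ℕ)
    · rw [dif_pos h]
      have hc2 : (∑ j : Fin m, if (i:ℕ)-1 = (j:ℕ) ∧ 0 < (i:ℕ) then x j else 0)
          = ∑ j : Fin m, if (i:ℕ)-1 = (j:ℕ) then x j else 0 := by
        apply Finset.sum_congr rfl
        intro j _
        exact if_congr (and_iff_left h) rfl rfl
      rw [hc2, sum_ite_val, dif_pos (by omega)]
    · rw [dif_neg h]
      apply Finset.sum_eq_zero
      intro j _
      exact if_neg (fun hc => h hc.2)

lemma eigen_extend (n : ℕ) (hn : 2 ≤ n) (q : Fin (2*n) → ℝ)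
    (hsym : ∀ i j : Fin (2 * n), (i : ℕ) + (j : ℕ) = 2 * n - 1 → q i = q j)
    (ε μ : ℝ) (hε : ε * ε = 1) (v : Fin n → ℝ) (hv : v ≠ 0)
    (heig : (pathHam n (fun i => q ⟨(i:ℕ), by omega⟩
        + (if (i:ℕ) = n - 1 then ε else 0))).mulVec v = μ • v) :
    ∃ x : Fin (2*n) → ℝ, x ≠ 0 ∧ (pathHam (2*n) q).mulVec x = μ • x := by
  set x : Fin (2*n) → ℝ :=
    (fun j => if h : (j:ℕ) < n then v ⟨(j:ℕ), h⟩ else ε * v ⟨2*n - 1 - (j:ℕ), by omega⟩)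
    with hx
  have hxval : ∀ (c : ℕ) (hc : c < 2*n) (hcn : c < n), x ⟨c, hc⟩ = v ⟨c, hcn⟩ := by
    intro c hc hcn; rw [hx]; exact dif_pos hcn
  have hxval' : ∀ (c : ℕ) (hc : c < 2*n) (hcn : ¬ c < n),
      x ⟨c, hc⟩ = ε * v ⟨2*n-1-c, by omega⟩ := by
    intro c hc hcn; rw [hx]; exact dif_neg hcn
  refine ⟨x, ?_, ?_⟩
  · intro hc
    apply hv
    funext i
    have h2 := congrFun hc ⟨(i:ℕ), by omega⟩
    rw [hxval _ _ i.is_lt] at h2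
    simpa using h2
  · funext i
    have hilt := i.is_lt
    have hj : ∀ (c : ℕ) (hc : c < n),
        (if h : c+1 < n then v ⟨c+1, h⟩ else 0)
          + (q ⟨c, by omega⟩ + (if c = n - 1 then ε else 0)) * v ⟨c, hc⟩
          + (if h : 0 < c then v ⟨c-1, by omega⟩ else 0) = μ * v ⟨c, hc⟩ := by
      intro c hc
      have h2 := congrFun heig ⟨c, hc⟩
      rw [pathHam_mulVec] at h2
      simpa using h2
    rw [pathHam_mulVec, Pi.smul_apply, smul_eq_mul]
    by_cases hi : (i:ℕ) < n
    · have hj' := hj (i:ℕ) hi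
      have hIq : q ⟨(i:ℕ), by omega⟩ = q i := congrArg q (Fin.ext rfl)
      rw [hIq] at hj'
      rw [hxval _ _ hi]
      by_cases hi1 : (i:ℕ)+1 < n
      · rw [dif_pos (show (i:ℕ)+1 < 2*n by omega), hxval _ _ hi1]
        rw [dif_pos hi1, if_neg (by omega), add_zero] at hj'
        by_cases hi0 : 0 < (i:ℕ)
        · rw [dif_pos hi0, hxval _ _ (show (i:ℕ)-1 < n by omega)]
          rw [dif_pos hi0] at hj'
          linear_combination hj'
        · rw [dif_neg hi0]
          rw [dif_neg hi0] at hj'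
          linear_combination hj'
      · have hieq : (i:ℕ) = n - 1 := by omega
        rw [dif_pos (show (i:ℕ)+1 < 2*n by omega),
          hxval' _ _ (show ¬ (i:ℕ)+1 < n by omega)]
        rw [dif_neg hi1, if_pos hieq, dif_pos (show 0 < (i:ℕ) by omega)] at hj'
        rw [dif_pos (show 0 < (i:ℕ) by omega), hxval _ _ (show (i:ℕ)-1 < n by omega)]
        have hmv : v ⟨2*n-1-((i:ℕ)+1), by omega⟩ = v ⟨(i:ℕ), hi⟩ :=
          congrArg v (Fin.ext (by simp only [Fin.val_mk]; omega))
        rw [hmv]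
        linear_combination hj'
    · have hj' := hj (2*n-1-(i:ℕ)) (by omega)
      have hIq : q ⟨2*n-1-(i:ℕ), by omega⟩ = q i :=
        (hsym i ⟨2*n-1-(i:ℕ), by omega⟩ (by simp only [Fin.val_mk]; omega)).symm
      rw [hIq] at hj'
      rw [hxval' _ _ hi]
      by_cases hin : (i:ℕ) = n
      · rw [dif_pos (show (i:ℕ)+1 < 2*n by omega),
          hxval' _ _ (show ¬ (i:ℕ)+1 < n by omega),
          dif_pos (show 0 < (i:ℕ) by omega),
          hxval _ _ (show (i:ℕ)-1 < n by omega)]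
        rw [dif_neg (show ¬ 2*n-1-(i:ℕ)+1 < n by omega), if_pos (by omega),
          dif_pos (show 0 < 2*n-1-(i:ℕ) by omega)] at hj'
        have e1 : v ⟨2*n-1-((i:ℕ)+1), by omega⟩ = v ⟨2*n-1-(i:ℕ)-1, by omega⟩ :=
          congrArg v (Fin.ext (by simp only [Fin.val_mk]; omega))
        have e2 : v ⟨(i:ℕ)-1, by omega⟩ = v ⟨2*n-1-(i:ℕ), by omega⟩ :=
          congrArg v (Fin.ext (by simp only [Fin.val_mk]; omega))
        rw [e1, e2]
        linear_combination ε * hj' - (v ⟨2*n-1-(i:ℕ), by omega⟩) * hε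
      · by_cases hilast : (i:ℕ) = 2*n-1
        · rw [dif_neg (show ¬ (i:ℕ)+1 < 2*n by omega),
            dif_pos (show 0 < (i:ℕ) by omega),
            hxval' _ _ (show ¬ (i:ℕ)-1 < n by omega)]
          rw [dif_pos (show 2*n-1-(i:ℕ)+1 < n by omega), if_neg (by omega),
            dif_neg (show ¬ 0 < 2*n-1-(i:ℕ) by omega)] at hj'
          have e1 : v ⟨2*n-1-((i:ℕ)-1), by omega⟩ = v ⟨2*n-1-(i:ℕ)+1, by omega⟩ :=
            congrArg v (Fin.ext (by simp only [Fin.val_mk]; omega))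
          rw [e1]
          linear_combination ε * hj'
        · rw [dif_pos (show (i:ℕ)+1 < 2*n by omega),
            hxval' _ _ (show ¬ (i:ℕ)+1 < n by omega),
            dif_pos (show 0 < (i:ℕ) by omega),
            hxval' _ _ (show ¬ (i:ℕ)-1 < n by omega)]
          rw [dif_pos (show 2*n-1-(i:ℕ)+1 < n by omega), if_neg (by omega),
            dif_pos (show 0 < 2*n-1-(i:ℕ) by omega)] at hj'
          have e1 : v ⟨2*n-1-((i:ℕ)+1), by omega⟩ = v ⟨2*n-1-(i:ℕ)-1, by omega⟩ :=
            congrArg v (Fin.ext (by simp only [Fin.val_mk]; omega))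
          have e2 : v ⟨2*n-1-((i:ℕ)-1), by omega⟩ = v ⟨2*n-1-(i:ℕ)+1, by omega⟩ :=
            congrArg v (Fin.ext (by simp only [Fin.val_mk]; omega))
          rw [e1, e2]
          linear_combination ε * hj'


def RatPoly (p : Polynomial ℝ) : Prop := ∃ P : Polynomial ℚ, p = P.map (Rat.castHom ℝ)

lemma RatPoly.coeff {p : Polynomial ℝ} (h : RatPoly p) (j : ℕ) :
    ∃ r : ℚ, p.coeff j = (r : ℝ) := by
  obtain ⟨P, rfl⟩ := h
  exact ⟨P.coeff j, Polynomial.coeff_map _ _⟩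

lemma RatPoly.sub {p q : Polynomial ℝ} (hp : RatPoly p) (hq : RatPoly q) :
    RatPoly (p - q) := by
  obtain ⟨P, rfl⟩ := hp; obtain ⟨Q, rfl⟩ := hq
  exact ⟨P - Q, (Polynomial.map_sub _).symm⟩

lemma RatPoly.mul {p q : Polynomial ℝ} (hp : RatPoly p) (hq : RatPoly q) :
    RatPoly (p * q) := by
  obtain ⟨P, rfl⟩ := hp; obtain ⟨Q, rfl⟩ := hq
  exact ⟨P * Q, (Polynomial.map_mul _).symm⟩

lemma ratPoly_X_sub_C {r : ℝ} (h : ∃ s : ℚ, r = (s:ℝ)) : RatPoly (X - C r) := by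
  obtain ⟨s, rfl⟩ := h
  exact ⟨X - C s, by simp⟩

lemma RatPoly.of_neg_half {p : Polynomial ℝ} (h : RatPoly (C (-2 : ℝ) * p)) : RatPoly p := by
  obtain ⟨P, hP⟩ := h
  refine ⟨C (-1/2 : ℚ) * P, ?_⟩
  have : p = C (-1/2 : ℝ) * (C (-2:ℝ) * p) := by
    rw [← mul_assoc, ← C_mul]
    norm_num
  rw [this, hP, Polynomial.map_mul, map_C]
  norm_num

lemma ratPoly_prod {m : ℕ} (f : Fin m → ℝ) (h : ∀ i, ∃ r : ℚ, f i = (r:ℝ)) :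
    RatPoly (∏ i, (X - C (f i))) := by
  choose r hr using h
  refine ⟨∏ i, (X - C (r i)), ?_⟩
  rw [Polynomial.map_prod]
  exact Finset.prod_congr rfl (fun i _ => by rw [Polynomial.map_sub, map_X, map_C]; rw [hr i]; rfl)

lemma pathHam_isHermitian (m : ℕ) (q : Fin m → ℝ) : (pathHam m q).IsHermitian := by
  refine Matrix.ext (fun i j => ?_)
  rw [Matrix.conjTranspose_apply, pathHam_apply, pathHam_apply]
  by_cases h : i = j
  · subst h; simp
  · rw [if_neg h, if_neg (Ne.symm h), star_trivial]
    congr 1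
    exact if_congr or_comm rfl rfl

lemma pathHam_sum_eq (m : ℕ) (hm : 0 < m) (q : Fin m → ℝ) :
    ∑ i, q i = -(pathHam m q).charpoly.coeff (m-1) := by
  have : Nonempty (Fin m) := ⟨⟨0, hm⟩⟩
  have htr : (pathHam m q).trace = ∑ i, q i := by
    rw [Matrix.trace]
    apply Finset.sum_congr rfl
    intro i _
    rw [Matrix.diag_apply, pathHam_apply, if_pos rfl, if_neg (by omega)]
    ring
  rw [← htr, Matrix.trace_eq_neg_charpoly_coeff, Fintype.card_fin]



/-- if perfect state transfer occurs between the endpoints of an even path with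
symmetric potential and all eigenvalues of the Hamiltonian are rational, then all the
potential values are rational. -/

theorem potential_rational_of_rational_eigenvalues (n : ℕ) (hn : 2 ≤ n)
    (q : Fin (2 * n) → ℝ)
    (hsym : ∀ i j : Fin (2 * n), (i : ℕ) + (j : ℕ) = 2 * n - 1 → q i = q j)
    (T : ℝ)
    (hpst : pst (pathHam (2 * n) q) ⟨0, by omega⟩ ⟨2 * n - 1, by omega⟩ T)
    (hrat : ∀ lam : ℝ,
      (∃ x : Fin (2 * n) → ℝ, x ≠ 0 ∧ (pathHam (2 * n) q).mulVec x = lam • x) →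
      ∃ r : ℚ, lam = (r : ℝ)) :
    ∀ i : Fin (2 * n), ∃ r : ℚ, q i = (r : ℝ) := by
  obtain ⟨k, rfl⟩ : ∃ k, n = k + 2 := ⟨n - 2, by omega⟩
  clear hn hpst
  -- restricted potentials
  set QR : (m : ℕ) → Fin m → ℝ :=
    fun m i => if h : (i:ℕ) < 2*(k+2) then q ⟨(i:ℕ), h⟩ else 0 with hQRdef
  have hQRval : ∀ (m : ℕ) (i : Fin m) (h : (i:ℕ) < 2*(k+2)), QR m i = q ⟨(i:ℕ), h⟩ :=
    fun m i h => dif_pos h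
  -- the two perturbed potentials
  have main : ∀ ε : ℝ, ε * ε = 1 →
      RatPoly ((pathHam (k+2)
        (fun i => QR (k+2) i + if (i:ℕ) = k+1 then ε else 0)).charpoly) := by
    intro ε hε
    set qe : Fin (k+2) → ℝ := fun i => QR (k+2) i + if (i:ℕ) = k+1 then ε else 0 with hqe
    have hH := pathHam_isHermitian (k+2) qe
    have hqe2 : qe = fun i : Fin (k+2) =>
        q ⟨(i:ℕ), by omega⟩ + (if (i:ℕ) = (k+2) - 1 then ε else 0) := by
      funext i
      show QR (k+2) i + (if (i:ℕ) = k+1 then ε else 0) = _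
      rw [hQRval _ i (by omega)]
      rfl
    have heigrat : ∀ j : Fin (k+2), ∃ r : ℚ, hH.eigenvalues j = r := by
      intro j
      apply hrat
      apply eigen_extend (k+2) (by omega) q hsym ε (hH.eigenvalues j) hε
        (fun i => hH.eigenvectorBasis j i)
      · intro hc
        apply hH.eigenvectorBasis.orthonormal.ne_zero j
        ext i
        exact congrFun hc i
      · rw [← hqe2]
        exact hH.mulVec_eigenvectorBasis j
    rw [charpoly_herm _ hH]
    exact ratPoly_prod _ heigrat
  -- recurrence, specialized
  have hcastQR : ∀ m : ℕ, (fun i : Fin m => QR (m+1) i.castSucc) = QR m := by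
    intro m; funext i; rfl
  have hrec : ∀ m : ℕ,
      (pathHam (m+2) (QR (m+2))).charpoly =
        (X - C (QR (m+2) (Fin.last (m+1)))) * (pathHam (m+1) (QR (m+1))).charpoly
          - (pathHam m (QR m)).charpoly := by
    intro m
    have h := pathHam_charpoly_rec m (QR (m+2))
    rw [hcastQR (m+1)] at h
    exact h
  -- recurrence for the perturbed potentials
  have hrecp : ∀ ε : ℝ,
      (pathHam (k+2) (fun i => QR (k+2) i + if (i:ℕ) = k+1 then ε else 0)).charpoly =
        (X - C (QR (k+2) (Fin.last (k+1)) + ε)) * (pathHam (k+1) (QR (k+1))).charpoly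
          - (pathHam k (QR k)).charpoly := by
    intro ε
    have h := pathHam_charpoly_rec k (fun i => QR (k+2) i + if (i:ℕ) = k+1 then ε else 0)
    have e1 : (fun i : Fin (k+1) =>
        QR (k+2) i.castSucc + if ((i.castSucc : Fin (k+2)):ℕ) = k+1 then ε else 0)
        = QR (k+1) := by
      funext i
      have : ((i.castSucc : Fin (k+2)):ℕ) = (i:ℕ) := rfl
      rw [this, if_neg (by omega), add_zero]
      exact congrFun (hcastQR (k+1)) i
    have e3 : (QR (k+2) (Fin.last (k+1))
        + if ((Fin.last (k+1) : Fin (k+2)) : ℕ) = k+1 then ε else 0)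
        = QR (k+2) (Fin.last (k+1)) + ε := by
      rw [if_pos (show ((Fin.last (k+1) : Fin (k+2)) : ℕ) = k + 1 from rfl)]
    have e4 : (fun i : Fin k => QR (k+2) ⟨(i:ℕ), by omega⟩
        + if ((⟨(i:ℕ), by omega⟩ : Fin (k+2)) : ℕ) = k+1 then ε else 0) = QR k := by
      funext i
      rw [if_neg (by have := i.is_lt; simp only [Fin.val_mk]; omega), add_zero]
    rw [h, e1, e3]
    exact congrArg (fun p => (X - C (QR (k + 2) (Fin.last (k+1)) + ε)) *
      (pathHam (k+1) (QR (k+1))).charpoly - (pathHam k p).charpoly) e4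
  have hp := main 1 (by norm_num)
  have hm := main (-1) (by norm_num)
  rw [hrecp 1] at hp
  rw [hrecp (-1)] at hm
  set A := (pathHam (k+1) (QR (k+1))).charpoly with hAdef
  set B := (pathHam k (QR k)).charpoly with hBdef
  set a := QR (k+2) (Fin.last (k+1)) with hadef
  -- A is rational
  have hA : RatPoly A := by
    apply RatPoly.of_neg_half
    have h2 : C (-2 : ℝ) * A =
        ((X - C (a + 1)) * A - B) - ((X - C (a + (-1))) * A - B) := by
      simp only [C_add, C_1, map_neg, map_ofNat]
      try ring
    rw [h2]
    exact hp.sub hm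
  -- sums of potentials along initial segments
  have hsum_last : ∀ m : ℕ, (∑ i, QR (m+1) i) = (∑ i, QR m i) + QR (m+1) (Fin.last m) := by
    intro m
    rw [Fin.sum_univ_castSucc]
    congr 1
  -- sum for k+1 rational
  have hSk1 : ∃ r : ℚ, (∑ i, QR (k+1) i) = (r:ℝ) := by
    obtain ⟨r, hr⟩ := hA.coeff k
    refine ⟨-r, ?_⟩
    rw [pathHam_sum_eq (k+1) (by omega), ← hAdef]
    show -A.coeff k = ((-r : ℚ) : ℝ)
    rw [hr]
    push_cast
    ring
  -- sum of the epsilon indicator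
  have hone : (∑ i : Fin (k+2), if (i:ℕ) = k+1 then (1:ℝ) else 0) = 1 := by
    have h' : ∀ i : Fin (k+2), (if (i:ℕ) = k+1 then (1:ℝ) else 0)
        = (if k+1 = (i:ℕ) then (fun _ : Fin (k+2) => (1:ℝ)) i else 0) :=
      fun i => if_congr eq_comm rfl rfl
    rw [Finset.sum_congr rfl (fun i _ => h' i), sum_ite_val, dif_pos (by omega)]
  have hSk2 : ∃ r : ℚ, (∑ i, QR (k+2) i) = (r:ℝ) := by
    obtain ⟨r, hr⟩ := (main 1 (by norm_num)).coeff (k+1)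
    refine ⟨-r - 1, ?_⟩
    have hs : (∑ i, (QR (k+2) i + if (i:ℕ) = k+1 then (1:ℝ) else 0))
        = -(pathHam (k+2)
            (fun i => QR (k+2) i + if (i:ℕ) = k+1 then (1:ℝ) else 0)).charpoly.coeff (k+1) :=
      pathHam_sum_eq (k+2) (by omega) _
    rw [Finset.sum_add_distrib, hone, hr] at hs
    push_cast
    linarith
  have ha : ∃ r : ℚ, a = (r:ℝ) := by
    obtain ⟨r2, h2⟩ := hSk2
    obtain ⟨r1, h1⟩ := hSk1
    refine ⟨r2 - r1, ?_⟩
    have hl := hsum_last (k+1)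
    rw [h2, h1] at hl
    push_cast
    rw [← hadef] at hl
    linarith
  obtain ⟨ra, hra⟩ := ha
  have hB : RatPoly B := by
    have hone' : RatPoly (X - C (a+1)) := ratPoly_X_sub_C ⟨ra + 1, by rw [hra]; push_cast; ring⟩
    have h2 : B = (X - C (a+1)) * A - ((X - C (a+1)) * A - B) := by ring
    rw [h2]
    exact (hone'.mul hA).sub hp
  -- downward induction
  have ind : ∀ d : ℕ,
      RatPoly ((pathHam (k+1-d) (QR (k+1-d))).charpoly) ∧
      RatPoly ((pathHam (k-d) (QR (k-d))).charpoly) := by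
    intro d
    induction d with
    | zero => exact ⟨hA, hB⟩
    | succ d ih =>
      have h1 : RatPoly ((pathHam (k+1-(d+1)) (QR (k+1-(d+1)))).charpoly) := by
        have he : k+1-(d+1) = k-d := by omega
        rw [he]; exact ih.2
      refine ⟨h1, ?_⟩
      by_cases hd : d+1 ≤ k
      · set m := k-(d+1) with hmdef
        have he2 : m+2 = k+1-d := by omega
        have he1 : m+1 = k-d := by omega
        have hP2 : RatPoly ((pathHam (m+2) (QR (m+2))).charpoly) := by rw [he2]; exact ih.1
        have hP1 : RatPoly ((pathHam (m+1) (QR (m+1))).charpoly) := by rw [he1]; exact ih.2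
        obtain ⟨r2, hr2⟩ := hP2.coeff (m+1)
        obtain ⟨r1, hr1⟩ := hP1.coeff m
        have hs2 : (∑ i, QR (m+2) i) = -(pathHam (m+2) (QR (m+2))).charpoly.coeff (m+1) :=
          pathHam_sum_eq (m+2) (by omega) _
        have hs1 : (∑ i, QR (m+1) i) = -(pathHam (m+1) (QR (m+1))).charpoly.coeff m :=
          pathHam_sum_eq (m+1) (by omega) _
        have hb : ∃ r : ℚ, QR (m+2) (Fin.last (m+1)) = (r:ℝ) := by
          refine ⟨-r2 + r1, ?_⟩
          have hl := hsum_last (m+1)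
          rw [hs2, hs1, hr2, hr1] at hl
          push_cast
          linarith
        obtain ⟨rb, hrb⟩ := hb
        have h3 : (pathHam m (QR m)).charpoly =
            (X - C (QR (m+2) (Fin.last (m+1)))) * (pathHam (m+1) (QR (m+1))).charpoly
              - (pathHam (m+2) (QR (m+2))).charpoly := by
          rw [hrec m]; ring
        rw [h3]
        exact ((ratPoly_X_sub_C ⟨rb, hrb⟩).mul hP1).sub hP2
      · have he : k-(d+1) = 0 := by omega
        rw [he]
        exact ⟨1, by rw [Matrix.charpoly, Matrix.det_isEmpty, Polynomial.map_one]⟩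
  -- all initial sums rational
  have hsums2 : ∀ m : ℕ, m ≤ k+2 → ∃ r : ℚ, (∑ i, QR m i) = (r:ℝ) := by
    intro m hm
    rcases Nat.eq_zero_or_pos m with h0 | h0
    · rw [h0]; exact ⟨0, by simp⟩
    rcases Nat.lt_or_ge m (k+2) with h | h
    · have hi : RatPoly ((pathHam m (QR m)).charpoly) := by
        have h' := (ind (k+1-m)).1
        rw [show k+1-(k+1-m) = m by omega] at h'
        exact h'
      obtain ⟨r, hr⟩ := hi.coeff (m-1)
      exact ⟨-r, by rw [pathHam_sum_eq m h0, hr]; push_cast; ring⟩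
    · rw [show m = k+2 by omega]
      exact hSk2
  -- each potential value on the first half
  have hQ : ∀ (c : ℕ) (hcc : c < k+2), ∃ r : ℚ, q ⟨c, by omega⟩ = (r:ℝ) := by
    intro c hc
    obtain ⟨r2, h2⟩ := hsums2 (c+1) (by omega)
    obtain ⟨r1, h1⟩ := hsums2 c (by omega)
    refine ⟨r2 - r1, ?_⟩
    have hl := hsum_last c
    rw [h2, h1] at hl
    have hv : QR (c+1) (Fin.last c) = q ⟨c, by omega⟩ := by
      rw [hQRval _ _ (show ((Fin.last c : Fin (c+1)):ℕ) < 2*(k+2) by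
        simp only [Fin.val_last]; omega)]
      exact congrArg q (Fin.ext rfl)
    rw [hv] at hl
    push_cast
    linarith
  intro i
  rcases Nat.lt_or_ge (i:ℕ) (k+2) with h | h
  · obtain ⟨r, hr⟩ := hQ (i:ℕ) h
    exact ⟨r, by rw [← hr]⟩
  · obtain ⟨r, hr⟩ := hQ (2*(k+2)-1-(i:ℕ)) (by have := i.is_lt; omega)
    refine ⟨r, ?_⟩
    rw [hsym i ⟨2*(k+2)-1-(i:ℕ), by have := i.is_lt; omega⟩
      (by simp only [Fin.val_mk]; have := i.is_lt; omega)]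
    rw [← hr]
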